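/- arXiv:2009.03641 — 3 statements merged into one kernel-verified Lean document; each statement's English description precedes it below -/
import Mathlib

section
/- For n ≥ 4, the perfect number N(n,2) satisfies: N(n,2) = t² − t if n = 2t, and N(n,2) = t² if n = 2t+1. Equivalently, a minimum-size upper perfect subset T of 2-element subsets of an n-set (meaning every 3-element subset of the n-set contains some member of T) that is also lower perfect (every singleton is contained in some member of T) has cardinality t²−t when n=2t and t² when n=2t+1. -/
lemma two_mul_choose_two (m : ℕ) : 2 * m.choose 2 = m * (m - 1) := by
  cases m with
  | zero => simp
  | succ k =>
    have h2 : 2 ∣ (k + 1) * k := by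
      rw [mul_comm]; exact (Nat.even_mul_succ_self k).two_dvd
    rw [Nat.choose_two_right]
    simp only [Nat.add_sub_cancel]
    exact Nat.mul_div_cancel' h2

lemma pair_subset_triple {α : Type*} [DecidableEq α] {a b c : α} {e : Finset α}
    (he : e.card = 2) (hs : e ⊆ ({a, b, c} : Finset α)) :
    e = {a, b} ∨ e = {a, c} ∨ e = {b, c} := by
  obtain ⟨x, y, hxy, rfl⟩ := Finset.card_eq_two.mp he
  have hx : x = a ∨ x = b ∨ x = c := by
    have := hs (Finset.mem_insert_self x {y}); simpa using this
  have hy : y = a ∨ y = b ∨ y = c := by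
    have := hs (Finset.mem_insert_of_mem (Finset.mem_singleton_self y)); simpa using this
  rcases hx with rfl | rfl | rfl <;> rcases hy with rfl | rfl | rfl <;>
    simp_all [Finset.pair_comm]


lemma eq_pair_of_sdiff {α : Type*} [DecidableEq α] {e P : Finset α} {w : α}
    (hec : e.card = 2) (hw : e \ P = {w}) : ∃ x ∈ P, e = {x, w} := by
  have h1 : (e \ P).card = 1 := by rw [hw]; simp
  have hints : (e ∩ P).card = 1 := by
    have := Finset.card_sdiff_add_card_inter e P; omega
  obtain ⟨x, hx⟩ := Finset.card_eq_one.mp hints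
  have hxm : x ∈ e ∩ P := hx ▸ Finset.mem_singleton_self x
  have hwm : w ∈ e \ P := by rw [hw]; simp
  refine ⟨x, (Finset.mem_inter.mp hxm).2, ?_⟩
  ext z
  simp only [Finset.mem_insert, Finset.mem_singleton]
  constructor
  · intro hz
    by_cases hzP : z ∈ P
    · left
      have : z ∈ e ∩ P := Finset.mem_inter.mpr ⟨hz, hzP⟩
      rwa [hx, Finset.mem_singleton] at this
    · right
      have : z ∈ e \ P := Finset.mem_sdiff.mpr ⟨hz, hzP⟩
      rwa [hw, Finset.mem_singleton] at this
  · rintro (rfl | rfl)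
    · exact (Finset.mem_inter.mp hxm).1
    · exact (Finset.mem_sdiff.mp hwm).1

lemma mantel_aux (n : ℕ) (m : ℕ) : ∀ (V : Finset (Fin n)) (E : Finset (Finset (Fin n))),
    V.card ≤ m →
    (∀ e ∈ E, e.card = 2 ∧ e ⊆ V) →
    (∀ a b c : Fin n, a ∈ V → b ∈ V → c ∈ V → a ≠ b → a ≠ c → b ≠ c →
      {a, b} ∈ E → {a, c} ∈ E → {b, c} ∉ E) →
    4 * E.card ≤ V.card * V.card := by
  induction m using Nat.strong_induction_on with
  | _ m ih =>
    intro V E hVm hE htri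
    rcases E.eq_empty_or_nonempty with rfl | ⟨e₀, he₀⟩
    · simp
    obtain ⟨hc2, hsub⟩ := hE e₀ he₀
    obtain ⟨u, v, huv, rfl⟩ := Finset.card_eq_two.mp hc2
    have hu : u ∈ V := hsub (Finset.mem_insert_self u {v})
    have hv : v ∈ V := hsub (Finset.mem_insert_of_mem (Finset.mem_singleton_self v))
    have huvV : ({u, v} : Finset (Fin n)) ⊆ V := by
      intro x hx; rcases Finset.mem_insert.mp hx with rfl | hx
      · exact hu
      · rw [Finset.mem_singleton.mp hx]; exact hv
    set V' := V \ {u, v} with hV'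
    set E' := E.filter (fun e => e ⊆ V') with hE'def
    have hVge2 : 2 ≤ V.card := by
      have := Finset.card_le_card huvV
      rwa [Finset.card_pair huv] at this
    have hV'card : V'.card = V.card - 2 := by
      rw [hV', Finset.card_sdiff_of_subset huvV, Finset.card_pair huv]
    -- induction hypothesis
    have hE'mem : ∀ e ∈ E', e.card = 2 ∧ e ⊆ V' := by
      intro e he
      obtain ⟨heE, hev'⟩ := Finset.mem_filter.mp he
      exact ⟨(hE e heE).1, hev'⟩
    have ihE' : 4 * E'.card ≤ V'.card * V'.card := by
      apply ih (V.card - 2) (by omega) V' E' (le_of_eq hV'card) hE'mem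
      intro a b c ha hb hc hab hac hbc h1 h2
      exact htri a b c (Finset.mem_sdiff.mp ha).1 (Finset.mem_sdiff.mp hb).1
        (Finset.mem_sdiff.mp hc).1 hab hac hbc
        (Finset.mem_filter.mp h1).1 (Finset.mem_filter.mp h2).1 ∘
        fun h => Finset.mem_filter.mp h |>.1
    -- edges meeting {u,v}
    set S := (E \ E').erase ({u, v} : Finset (Fin n)) with hS
    have hSprop : ∀ e ∈ S, (e \ {u, v}).card = 1 ∧ e \ {u, v} ⊆ V' := by
      intro e he
      have hne : e ≠ {u, v} := Finset.ne_of_mem_erase he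
      have heE : e ∈ E := (Finset.mem_sdiff.mp (Finset.mem_of_mem_erase he)).1
      have hnotE' : e ∉ E' := (Finset.mem_sdiff.mp (Finset.mem_of_mem_erase he)).2
      obtain ⟨hec, heV⟩ := hE e heE
      have hsubV' : e \ {u, v} ⊆ V' := by
        rw [hV']; exact Finset.sdiff_subset_sdiff heV (le_refl _)
      refine ⟨?_, hsubV'⟩
      have hsd : (e \ {u, v}).card + (e ∩ {u, v}).card = e.card :=
        Finset.card_sdiff_add_card_inter e {u, v}
      have hile : (e ∩ {u, v}).card ≤ 2 := by
        have := Finset.card_le_card ((Finset.inter_subset_right : e ∩ {u, v} ⊆ _))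
        rwa [Finset.card_pair huv] at this
      have hipos : 1 ≤ (e ∩ {u, v}).card := by
        rcases Finset.eq_empty_or_nonempty (e ∩ {u, v}) with hemp | ⟨x, hx⟩
        · exfalso
          apply hnotE'
          rw [hE'def, Finset.mem_filter]
          refine ⟨heE, ?_⟩
          rw [hV']
          intro x hx
          exact Finset.mem_sdiff.mpr ⟨heV hx, fun hxc =>
            Finset.notMem_empty x (hemp ▸ Finset.mem_inter.mpr ⟨hx, hxc⟩)⟩
        · exact Finset.card_pos.mpr ⟨x, hx⟩
      have hine : (e ∩ {u, v}).card ≠ 2 := by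
        intro h2'
        apply hne
        have h₁ : e ∩ {u, v} = e :=
          Finset.eq_of_subset_of_card_le Finset.inter_subset_left (by omega)
        have h₂ : e ⊆ {u, v} := h₁ ▸ Finset.inter_subset_right
        exact Finset.eq_of_subset_of_card_le h₂
          (by rw [Finset.card_pair huv, hec])
      omega
    have hScard : S.card ≤ V'.card := by
      have := Finset.card_le_card_of_injOn (fun e => e \ ({u, v} : Finset (Fin n)))
        (fun e he => Finset.mem_powersetCard.mpr ⟨(hSprop e he).2, (hSprop e he).1⟩)
        (fun e1 h1 e2 h2 heq => ?_)
      · calc S.card ≤ (V'.powersetCard 1).card := this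
          _ = V'.card := by rw [Finset.card_powersetCard, Nat.choose_one_right]
      -- injectivity
      · simp only at heq
        obtain ⟨w, hw⟩ := Finset.card_eq_one.mp (hSprop e1 h1).1
        have hw2 : e2 \ {u, v} = {w} := by rw [← heq, hw]
        have hwV' : w ∈ V' := (hSprop e1 h1).2 (hw ▸ Finset.mem_singleton_self w)
        have hwV : w ∈ V := (Finset.mem_sdiff.mp hwV').1
        have hwuv : w ∉ ({u, v} : Finset (Fin n)) := (Finset.mem_sdiff.mp hwV').2
        have hwu : w ≠ u := fun h => hwuv (by simp [h])
        have hwv : w ≠ v := fun h => hwuv (by simp [h])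
        -- each eᵢ = (eᵢ ∩ {u,v}) ∪ {w}, with eᵢ ∩ {u,v} a singleton {xᵢ}
        have he1E' : e1 ∈ E := (Finset.mem_sdiff.mp (Finset.mem_of_mem_erase h1)).1
        have he2E' : e2 ∈ E := (Finset.mem_sdiff.mp (Finset.mem_of_mem_erase h2)).1
        have hx1 : ∃ x ∈ ({u, v} : Finset (Fin n)), e1 = {x, w} :=
          eq_pair_of_sdiff (hE e1 he1E').1 hw
        have hx2 : ∃ x ∈ ({u, v} : Finset (Fin n)), e2 = {x, w} :=
          eq_pair_of_sdiff (hE e2 he2E').1 hw2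
        obtain ⟨x1, hx1m, rfl⟩ := hx1
        obtain ⟨x2, hx2m, rfl⟩ := hx2
        by_cases hxx : x1 = x2
        · rw [hxx]
        · exfalso
          have he1E : ({x1, w} : Finset (Fin n)) ∈ E :=
            (Finset.mem_sdiff.mp (Finset.mem_of_mem_erase h1)).1
          have he2E : ({x2, w} : Finset (Fin n)) ∈ E :=
            (Finset.mem_sdiff.mp (Finset.mem_of_mem_erase h2)).1
          -- x1, x2 ∈ {u,v}, distinct, so {x1,x2} = {u,v} and {x1,x2} ∈ E
          have hx12 : ({x1, x2} : Finset (Fin n)) = {u, v} := by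
            apply Finset.eq_of_subset_of_card_le
            · intro z hz
              rcases Finset.mem_insert.mp hz with rfl | hz
              · exact hx1m
              · rw [Finset.mem_singleton.mp hz]; exact hx2m
            · rw [Finset.card_pair huv, Finset.card_pair hxx]
          have hx1w : x1 ≠ w := fun h => hwuv (h ▸ hx1m)
          have hx2w : x2 ≠ w := fun h => hwuv (h ▸ hx2m)
          -- apply triangle-freeness to x1, x2, w
          have hx1V : x1 ∈ V := huvV hx1m
          have hx2V : x2 ∈ V := huvV hx2m
          have hE12 : ({x1, x2} : Finset (Fin n)) ∈ E := hx12 ▸ he₀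
          have h1w : ({x1, w} : Finset (Fin n)) ∈ E := he1E
          have h2w : ({x2, w} : Finset (Fin n)) ∈ E := he2E
          exact htri x1 x2 w hx1V hx2V hwV hxx hx1w hx2w hE12 h1w h2w
    -- final arithmetic
    have hrest : (E \ E').card ≤ S.card + 1 := by
      have hsub' : E \ E' ⊆ insert ({u, v} : Finset (Fin n)) S := by
        intro e he
        by_cases hcase : e = ({u, v} : Finset (Fin n))
        · simp [hcase]
        · exact Finset.mem_insert_of_mem (Finset.mem_erase.mpr ⟨hcase, he⟩)
      calc (E \ E').card ≤ (insert ({u, v} : Finset (Fin n)) S).card :=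
            Finset.card_le_card hsub'
        _ ≤ S.card + 1 := Finset.card_insert_le _ _
    have hsplit : E'.card + (E \ E').card = E.card := by
      rw [add_comm]
      exact Finset.card_sdiff_add_card_eq_card (Finset.filter_subset _ _)
    obtain ⟨s, hs⟩ : ∃ s, V.card = s + 2 := ⟨V.card - 2, by omega⟩
    have hV's : V'.card = s := by omega
    rw [hV's] at ihE' hScard
    rw [hs]
    have expand : (s + 2) * (s + 2) = s * s + 4 * s + 4 := by ring
    linarith


lemma construction (n a : ℕ) (ha2 : 2 ≤ a) (hb2 : 2 ≤ n - a) (han : a ≤ n) :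
    ∃ T : Finset (Finset (Fin n)),
      (∀ e ∈ T, e.card = 2) ∧
      (∀ s : Finset (Fin n), s.card = 3 → ∃ e ∈ T, e ⊆ s) ∧
      (∀ v : Fin n, ∃ e ∈ T, v ∈ e) ∧
      T.card = a.choose 2 + (n - a).choose 2 := by
  classical
  set A : Finset (Fin n) := Finset.univ.filter (fun i => (i : ℕ) < a) with hA
  have hAmem : ∀ i : Fin n, i ∈ A ↔ (i : ℕ) < a := by
    intro i; simp [hA]
  have hAcard : A.card = a := by
    have : A = Finset.map (Fin.castLEEmb han) Finset.univ := by
      ext x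
      simp only [Finset.mem_map, Finset.mem_univ, true_and, hAmem]
      constructor
      · intro hx; exact ⟨⟨(x : ℕ), hx⟩, by ext; simp⟩
      · rintro ⟨y, rfl⟩; simpa [Fin.castLEEmb] using y.isLt
    rw [this, Finset.card_map, Finset.card_univ, Fintype.card_fin]
  have hBcard : Aᶜ.card = n - a := by
    rw [Finset.card_compl, Fintype.card_fin, hAcard]
  set T : Finset (Finset (Fin n)) := A.powersetCard 2 ∪ Aᶜ.powersetCard 2 with hT
  have hmemT : ∀ e, e ∈ T ↔ (e ⊆ A ∧ e.card = 2) ∨ (e ⊆ Aᶜ ∧ e.card = 2) := by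
    intro e
    simp [hT, Finset.mem_union, Finset.mem_powersetCard]
  refine ⟨T, ?_, ?_, ?_, ?_⟩
  · intro e he
    rcases (hmemT e).mp he with ⟨_, h⟩ | ⟨_, h⟩ <;> exact h
  · intro s hs
    have hpart : (s ∩ A).card + (s ∩ Aᶜ).card = 3 := by
      rw [← Finset.sdiff_eq_inter_compl, Finset.card_inter_add_card_sdiff, hs]
    rcases (show 2 ≤ (s ∩ A).card ∨ 2 ≤ (s ∩ Aᶜ).card by omega) with h2 | h2
    · obtain ⟨e, hes, hec⟩ := Finset.exists_subset_card_eq (s := s ∩ A) h2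
      exact ⟨e, (hmemT e).mpr (Or.inl ⟨hes.trans Finset.inter_subset_right, hec⟩),
        hes.trans Finset.inter_subset_left⟩
    · obtain ⟨e, hes, hec⟩ := Finset.exists_subset_card_eq (s := s ∩ Aᶜ) h2
      exact ⟨e, (hmemT e).mpr (Or.inr ⟨hes.trans Finset.inter_subset_right, hec⟩),
        hes.trans Finset.inter_subset_left⟩
  · intro v
    by_cases hv : v ∈ A
    · obtain ⟨w, hw, hwv⟩ := Finset.exists_mem_ne (by omega : 1 < A.card) v
      refine ⟨{w, v}, (hmemT _).mpr (Or.inl ⟨?_, Finset.card_pair hwv⟩), by simp⟩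
      intro z hz
      rcases Finset.mem_insert.mp hz with rfl | hz
      · exact hw
      · rw [Finset.mem_singleton.mp hz]; exact hv
    · have hv' : v ∈ Aᶜ := Finset.mem_compl.mpr hv
      obtain ⟨w, hw, hwv⟩ := Finset.exists_mem_ne (by omega : 1 < Aᶜ.card) v
      refine ⟨{w, v}, (hmemT _).mpr (Or.inr ⟨?_, Finset.card_pair hwv⟩), by simp⟩
      intro z hz
      rcases Finset.mem_insert.mp hz with rfl | hz
      · exact hw
      · rw [Finset.mem_singleton.mp hz]; exact hv'
  · have hdisj : Disjoint (A.powersetCard 2) (Aᶜ.powersetCard 2) := by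
      rw [Finset.disjoint_left]
      intro e he1 he2
      obtain ⟨hsub1, hc⟩ := Finset.mem_powersetCard.mp he1
      obtain ⟨hsub2, _⟩ := Finset.mem_powersetCard.mp he2
      have : e ⊆ A ∩ Aᶜ := Finset.subset_inter hsub1 hsub2
      rw [Finset.inter_compl] at this
      have := Finset.card_le_card this
      simp [hc] at this
    rw [hT, Finset.card_union_of_disjoint hdisj, Finset.card_powersetCard,
      Finset.card_powersetCard, hAcard, hBcard]




/-- `perfectNum n` is the `(n,2)`-th perfect number `N(n,2)`: the minimum cardinality
of a perfect subset of the 2-element subsets of an `n`-set, i.e. of a family `T` of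
2-subsets that is upper perfect (every 3-subset contains a member of `T`) and lower
perfect (every vertex lies in a member of `T`). -/
noncomputable def perfectNum (n : ℕ) : ℕ :=
  sInf {k : ℕ | ∃ T : Finset (Finset (Fin n)),
    (∀ e ∈ T, e.card = 2) ∧
    (∀ s : Finset (Fin n), s.card = 3 → ∃ e ∈ T, e ⊆ s) ∧
    (∀ v : Fin n, ∃ e ∈ T, v ∈ e) ∧
    T.card = k}

/-- For `n ≥ 4`, `N(n,2) = t² - t` if `n = 2t` and `N(n,2) = t²` if `n = 2t + 1`. -/
theorem stmt3 (n : ℕ) (hn : 4 ≤ n) :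
    (∀ t : ℕ, n = 2 * t → perfectNum n = t ^ 2 - t) ∧
    (∀ t : ℕ, n = 2 * t + 1 → perfectNum n = t ^ 2) := by
  classical
  -- the construction gives nonemptiness and the upper bound
  obtain ⟨T₀, hT01, hT02, hT03, hT04⟩ :=
    construction n (n / 2) (by omega) (by omega) (Nat.div_le_self n 2)
  have hup : perfectNum n ≤ (n / 2).choose 2 + (n - n / 2).choose 2 := by
    rw [perfectNum]
    exact Nat.sInf_le ⟨T₀, hT01, hT02, hT03, hT04⟩
  have hne : {k : ℕ | ∃ T : Finset (Finset (Fin n)),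
      (∀ e ∈ T, e.card = 2) ∧
      (∀ s : Finset (Fin n), s.card = 3 → ∃ e ∈ T, e ⊆ s) ∧
      (∀ v : Fin n, ∃ e ∈ T, v ∈ e) ∧
      T.card = k}.Nonempty := ⟨_, T₀, hT01, hT02, hT03, rfl⟩
  obtain ⟨T, hT1, hT2, hT3, hT4⟩ : ∃ T : Finset (Finset (Fin n)),
      (∀ e ∈ T, e.card = 2) ∧
      (∀ s : Finset (Fin n), s.card = 3 → ∃ e ∈ T, e ⊆ s) ∧
      (∀ v : Fin n, ∃ e ∈ T, v ∈ e) ∧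
      T.card = perfectNum n := by
    rw [perfectNum]
    exact Nat.sInf_mem hne
  -- lower bound via Mantel
  set E : Finset (Finset (Fin n)) :=
    (Finset.univ : Finset (Fin n)).powersetCard 2 \ T with hE
  have hTsub : T ⊆ (Finset.univ : Finset (Fin n)).powersetCard 2 := by
    intro e he
    exact Finset.mem_powersetCard.mpr ⟨Finset.subset_univ e, hT1 e he⟩
  have hcount : E.card + perfectNum n = n.choose 2 := by
    rw [← hT4, hE, Finset.card_sdiff_add_card_eq_card hTsub,
      Finset.card_powersetCard, Finset.card_univ, Fintype.card_fin]
  have hmantel : 4 * E.card ≤ n * n := by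
    have huniv : (Finset.univ : Finset (Fin n)).card = n := by
      rw [Finset.card_univ, Fintype.card_fin]
    have := mantel_aux n n (Finset.univ : Finset (Fin n)) E (le_of_eq huniv)
      (fun e he => ⟨(Finset.mem_powersetCard.mp (Finset.mem_sdiff.mp he).1).2,
        Finset.subset_univ e⟩) ?_
    · rwa [huniv] at this
    · intro a b c _ _ _ hab hac hbc h1 h2 h3
      have hs3 : ({a, b, c} : Finset (Fin n)).card = 3 :=
        Finset.card_eq_three.mpr ⟨a, b, c, hab, hac, hbc, rfl⟩
      obtain ⟨e, heT, hes⟩ := hT2 _ hs3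
      rcases pair_subset_triple (hT1 e heT) hes with rfl | rfl | rfl
      · exact (Finset.mem_sdiff.mp h1).2 heT
      · exact (Finset.mem_sdiff.mp h2).2 heT
      · exact (Finset.mem_sdiff.mp h3).2 heT
  constructor
  · -- even case
    rintro t rfl
    obtain ⟨s, rfl⟩ : ∃ s, t = s + 2 := ⟨t - 2, by omega⟩
    have hdiv : 2 * (s + 2) / 2 = s + 2 := by omega
    have hdiv2 : 2 * (s + 2) - (s + 2) = s + 2 := by omega
    rw [hdiv, hdiv2] at hup
    have hc : 2 * ((s + 2).choose 2) = (s + 2) * (s + 1) := by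
      rw [two_mul_choose_two]; congr 1
    have hC : 2 * ((2 * (s + 2)).choose 2) = (2 * s + 4) * (2 * s + 3) := by
      rw [two_mul_choose_two]
      congr 1 <;> omega
    have hBn : 2 * (s + 2) * (2 * (s + 2)) = 4 * (s * s) + 16 * s + 16 := by ring
    have r1 : (2 * s + 4) * (2 * s + 3) = 4 * (s * s) + 14 * s + 12 := by ring
    have r2 : (s + 2) * (s + 1) = s * s + 3 * s + 2 := by ring
    have hlow : 4 * (s * s) + 12 * s + 8 ≤ 4 * perfectNum (2 * (s + 2)) := by
      nlinarith [hcount, hmantel]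
    have hhigh : perfectNum (2 * (s + 2)) ≤ s * s + 3 * s + 2 := by linarith
    have hg : (s + 2) ^ 2 = s * s + 4 * s + 4 := by ring
    rw [hg]
    obtain ⟨p, hp⟩ : ∃ p, s * s = p := ⟨_, rfl⟩
    rw [hp] at hlow hhigh ⊢
    omega
  · -- odd case
    rintro t rfl
    obtain ⟨s, rfl⟩ : ∃ s, t = s + 2 := ⟨t - 2, by omega⟩
    have hdiv : (2 * (s + 2) + 1) / 2 = s + 2 := by omega
    have hdiv2 : 2 * (s + 2) + 1 - (s + 2) = s + 3 := by omega
    rw [hdiv, hdiv2] at hup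
    have hc1 : 2 * ((s + 2).choose 2) = (s + 2) * (s + 1) := by
      rw [two_mul_choose_two]; congr 1
    have hc2 : 2 * ((s + 3).choose 2) = (s + 3) * (s + 2) := by
      rw [two_mul_choose_two]; congr 1
    have hC : 2 * ((2 * (s + 2) + 1).choose 2) = (2 * s + 5) * (2 * s + 4) := by
      rw [two_mul_choose_two]
      congr 1 <;> omega
    have hBn : (2 * (s + 2) + 1) * (2 * (s + 2) + 1) = 4 * (s * s) + 20 * s + 25 := by
      ring
    have r1 : (2 * s + 5) * (2 * s + 4) = 4 * (s * s) + 18 * s + 20 := by ring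
    have r2 : (s + 2) * (s + 1) = s * s + 3 * s + 2 := by ring
    have r3 : (s + 3) * (s + 2) = s * s + 5 * s + 6 := by ring
    have hlow : 4 * (s * s) + 16 * s + 15 ≤ 4 * perfectNum (2 * (s + 2) + 1) := by
      nlinarith [hcount, hmantel]
    have hhigh : perfectNum (2 * (s + 2) + 1) ≤ s * s + 4 * s + 4 := by linarith
    have hg : (s + 2) ^ 2 = s * s + 4 * s + 4 := by ring
    rw [hg]
    obtain ⟨p, hp⟩ : ∃ p, s * s = p := ⟨_, rfl⟩
    rw [hp] at hlow hhigh ⊢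
    omega
end

section
/- For every integer b with −C(n,2)+2 ≤ b ≤ C(n,2) − 2N(n,2) and b ≡ C(n,2) (mod 2), where n ≥ 4, there exists an upper perfect family T of 2-element subsets of {1,...,n} with |T| = (C(n,2) − b)/2 whose Stanley–Reisner complement is 1-dimensional; equivalently, there exists a quasi f-ideal of degree 2 and type (0,b) in k[x_1,...,x_n]. -/
lemma perfectNum_mem (n : ℕ) (hn : 4 ≤ n) :
    ∃ T : Finset (Finset (Fin n)),
    (∀ e ∈ T, e.card = 2) ∧
    (∀ s : Finset (Fin n), s.card = 3 → ∃ e ∈ T, e ⊆ s) ∧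
    (∀ v : Fin n, ∃ e ∈ T, v ∈ e) ∧
    T.card = perfectNum n := by
  have hne : {k : ℕ | ∃ T : Finset (Finset (Fin n)),
      (∀ e ∈ T, e.card = 2) ∧
      (∀ s : Finset (Fin n), s.card = 3 → ∃ e ∈ T, e ⊆ s) ∧
      (∀ v : Fin n, ∃ e ∈ T, v ∈ e) ∧
      T.card = k}.Nonempty := by
    have hpos : 0 < n := by omega
    haveI : Nontrivial (Fin n) := Fin.nontrivial_iff_two_le.mpr (by omega)
    refine ⟨(Finset.univ.powersetCard 2).card, Finset.univ.powersetCard 2, ?_, ?_, ?_, rfl⟩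
    · intro e he
      exact (Finset.mem_powersetCard.mp he).2
    · intro s hs
      obtain ⟨e, hes, hec⟩ := Finset.exists_subset_card_eq (by omega : 2 ≤ s.card)
      exact ⟨e, Finset.mem_powersetCard.mpr ⟨e.subset_univ, hec⟩, hes⟩
    · intro v
      obtain ⟨w, hw⟩ := exists_ne v
      refine ⟨{v, w}, Finset.mem_powersetCard.mpr ⟨Finset.subset_univ _, ?_⟩, by simp⟩
      rw [Finset.card_pair (Ne.symm hw)]
  exact Nat.sInf_mem hne

/-- For every integer `b` with `-C(n,2) + 2 ≤ b ≤ C(n,2) - 2N(n,2)` of the same parity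
as `C(n,2)` (where `n ≥ 4`), there is an upper perfect family `T` of 2-subsets of an
`n`-set with `|T| = (C(n,2) - b)/2` whose independence complex is 1-dimensional
(some 2-subset is missing from `T`): a quasi f-ideal of degree 2 and type `(0,b)`. -/
theorem stmt8 (n : ℕ) (hn : 4 ≤ n) (b : ℤ)
    (h1 : -(n.choose 2 : ℤ) + 2 ≤ b)
    (h2 : b ≤ (n.choose 2 : ℤ) - 2 * perfectNum n)
    (h3 : b % 2 = (n.choose 2 : ℤ) % 2) :
    ∃ T : Finset (Finset (Fin n)),
      (∀ e ∈ T, e.card = 2) ∧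
      (∀ s : Finset (Fin n), s.card = 3 → ∃ e ∈ T, e ⊆ s) ∧
      (∃ e : Finset (Fin n), e.card = 2 ∧ e ∉ T) ∧
      2 * (T.card : ℤ) = (n.choose 2 : ℤ) - b := by
  obtain ⟨T₀, hT₀2, hT₀up, _, hT₀card⟩ := perfectNum_mem n hn
  set E : Finset (Finset (Fin n)) := Finset.univ.powersetCard 2 with hE
  have hEcard : E.card = n.choose 2 := by
    simp [hE, Finset.card_powersetCard]
  have hT₀E : T₀ ⊆ E := by
    intro e he
    exact Finset.mem_powersetCard.mpr ⟨e.subset_univ, hT₀2 e he⟩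
  have hNle : (perfectNum n : ℤ) ≤ n.choose 2 := by
    rw [← hEcard, ← hT₀card]
    exact_mod_cast Int.ofNat_le.mpr (Finset.card_le_card hT₀E)
  -- parity: C(n,2) - b is even
  have heven : (2 : ℤ) ∣ ((n.choose 2 : ℤ) - b) := by omega
  obtain ⟨m, hm⟩ := heven
  have hm0 : 0 ≤ m := by omega
  set t : ℕ := m.toNat with ht
  have htm : (t : ℤ) = m := Int.toNat_of_nonneg hm0
  have ht1 : perfectNum n ≤ t := by
    have : (perfectNum n : ℤ) ≤ t := by omega
    exact_mod_cast this
  have ht2 : t ≤ E.card := by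
    have : (t : ℤ) ≤ E.card := by rw [hEcard]; omega
    exact_mod_cast this
  obtain ⟨T, hT₀T, hTE, hTcard⟩ :=
    Finset.exists_subsuperset_card_eq hT₀E (hT₀card ▸ ht1) ht2
  refine ⟨T, ?_, ?_, ?_, ?_⟩
  · intro e he
    exact (Finset.mem_powersetCard.mp (hTE he)).2
  · intro s hs
    obtain ⟨e, heT, hes⟩ := hT₀up s hs
    exact ⟨e, hT₀T heT, hes⟩
  · have hlt : T.card < E.card := by
      have : (t : ℤ) < E.card := by rw [hEcard]; omega
      rw [hTcard]; exact_mod_cast this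
    have hss : T ⊂ E := hTE.ssubset_of_ne (fun h => by simp [h] at hlt)
    obtain ⟨e, heE, heT⟩ := Finset.exists_of_ssubset hss
    exact ⟨e, (Finset.mem_powersetCard.mp heE).2, heT⟩
  · rw [hTcard]; omega
end

section
/- If I is a quasi f-ideal of degree 2 and type (0,b) in k[x_1,...,x_n], then −C(n,2) + 2 ≤ b ≤ C(n,2) − 2N(n,2). -/
/-- The edge set of `G` is upper perfect: every 3-element vertex subset spans an edge,
i.e. `G` has no independent set of size 3. -/
def upperPerfectEdges {n : ℕ} (G : SimpleGraph (Fin n)) : Prop :=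
  ∀ s : Finset (Fin n), s.card = 3 → ∃ i ∈ s, ∃ j ∈ s, G.Adj i j

/-- The edge ideal of `G` is a quasi f-ideal of degree 2 and type `(0, b)`:
the facet complex (the graph `G`, with full vertex set since no vertex is isolated)
and the Stanley–Reisner (independence) complex are both 1-dimensional, their vertex
counts agree, and the difference of the numbers of 1-faces,
`(C(n,2) - |E(G)|) - |E(G)|`, equals `b`. -/
def QuasiFTwo {n : ℕ} (G : SimpleGraph (Fin n)) [DecidableRel G.Adj] (b : ℤ) : Prop :=
  (∀ v, ∃ w, G.Adj v w) ∧
  upperPerfectEdges G ∧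
  (∃ v w : Fin n, v ≠ w ∧ ¬ G.Adj v w) ∧
  ((n.choose 2 : ℤ) - G.edgeFinset.card) - G.edgeFinset.card = b

private def s2f {α : Type*} [DecidableEq α] (e : Sym2 α) : Finset α :=
  Sym2.lift ⟨fun a b => {a, b}, fun a b => Finset.pair_comm a b⟩ e

private lemma mem_s2f {α : Type*} [DecidableEq α] (e : Sym2 α) (v : α) :
    v ∈ s2f e ↔ v ∈ e := by
  induction e using Sym2.ind with
  | _ a b => simp [s2f, Sym2.mem_iff]

private lemma s2f_inj {α : Type*} [DecidableEq α] : Function.Injective (s2f (α := α)) := by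
  intro e f hef
  exact Sym2.ext fun x => by rw [← mem_s2f, ← mem_s2f, hef]

/-- If `I` is a quasi f-ideal of degree 2 and type `(0,b)` in `n` variables,
then `-C(n,2) + 2 ≤ b ≤ C(n,2) - 2N(n,2)`. -/
theorem stmt9 {n : ℕ} (G : SimpleGraph (Fin n)) [DecidableRel G.Adj] (b : ℤ)
    (h : QuasiFTwo G b) :
    -(n.choose 2 : ℤ) + 2 ≤ b ∧ b ≤ (n.choose 2 : ℤ) - 2 * perfectNum n := by
  obtain ⟨hlow, hup, ⟨v, w, hvw, hnadj⟩, hb⟩ := h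
  classical
  -- |E| ≤ C(n,2) - 1
  have hlt : G.edgeFinset.card < n.choose 2 := by
    have hGtop : G < ⊤ := by
      refine lt_of_le_of_ne le_top fun hG => ?_
      exact hnadj (hG ▸ (by simp [hvw] : (⊤ : SimpleGraph (Fin n)).Adj v w))
    have := Finset.card_lt_card (SimpleGraph.edgeFinset_ssubset_edgeFinset.mpr hGtop)
    calc G.edgeFinset.card < (⊤ : SimpleGraph (Fin n)).edgeFinset.card := this
      _ ≤ n.choose 2 := by
        simpa using SimpleGraph.card_edgeFinset_le_card_choose_two (G := (⊤ : SimpleGraph (Fin n)))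
  -- perfectNum n ≤ |E|
  have hperf : perfectNum n ≤ G.edgeFinset.card := by
    apply Nat.sInf_le
    refine ⟨G.edgeFinset.image s2f, ?_, ?_, ?_, ?_⟩
    · intro e he
      obtain ⟨e', he', rfl⟩ := Finset.mem_image.mp he
      induction e' using Sym2.ind with
      | _ a b =>
        have hadj : G.Adj a b := by simpa [SimpleGraph.mem_edgeFinset] using he'
        simp [s2f, Finset.card_pair hadj.ne]
    · intro s hs
      obtain ⟨i, hi, j, hj, hij⟩ := hup s hs
      refine ⟨s2f s(i, j), Finset.mem_image_of_mem _ (by simpa using hij), ?_⟩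
      intro x hx
      rcases (by simpa [Sym2.mem_iff] using (mem_s2f _ x).mp hx) with rfl | rfl
      · exact hi
      · exact hj
    · intro u
      obtain ⟨u', hadj⟩ := hlow u
      exact ⟨s2f s(u, u'), Finset.mem_image_of_mem _ (by simpa using hadj),
        (mem_s2f _ u).mpr (by simp)⟩
    · exact Finset.card_image_of_injective _ s2f_inj
  constructor
  · have : (G.edgeFinset.card : ℤ) < (n.choose 2 : ℤ) := by exact_mod_cast hlt
    omega
  · have : (perfectNum n : ℤ) ≤ (G.edgeFinset.card : ℤ) := by exact_mod_cast hperf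
    omega
end
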